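/- Let p be an odd prime, A' = {−(p−1)/2, …, (p−1)/2} ⊆ Z/p²Z, k ≥ 1, and let r = n'_k((p−1)/2) be the number of ordered k-tuples from A' summing to (p−1)/2 in Z/p²Z. Then Σ_{x ∈ Z/p²Z} min(r, n'_k(x)) = rp + Σ_{x ∉ A'} n'_k(x). -/

import Mathlib

set_option linter.unusedSectionVars false

section Aux

variable (p : ℕ) [NeZero p]

private noncomputable def Ap : Finset (ZMod (p ^ 2)) :=
  (Finset.Icc (-(((p : ℤ) - 1) / 2)) (((p : ℤ) - 1) / 2)).image
    (fun i : ℤ => (i : ZMod (p ^ 2)))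

private noncomputable def cnt (k : ℕ) (z : ZMod (p ^ 2)) : ℕ :=
  ((Fintype.piFinset (fun _ : Fin k => Ap p)).filter
      (fun f => ∑ i, f i = z)).card

private lemma zmod_int_inj (i j : ℤ) (hd : |i - j| < (p : ℤ) ^ 2)
    (h : (i : ZMod (p ^ 2)) = (j : ZMod (p ^ 2))) : i = j := by
  have h2 : ((i - j : ℤ) : ZMod (p ^ 2)) = 0 := by push_cast; rw [h]; ring
  have h3 : ((p ^ 2 : ℕ) : ℤ) ∣ (i - j) := (ZMod.intCast_zmod_eq_zero_iff_dvd _ _).mp h2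
  have h4 : ((p ^ 2 : ℕ) : ℤ) ∣ |i - j| := (dvd_abs _ _).mpr h3
  rcases eq_or_ne (i - j) 0 with h6 | h6
  · omega
  · have := Int.le_of_dvd (abs_pos.mpr h6) h4
    push_cast at this hd
    omega

private lemma mem_Ap (i : ℤ) (hi : |i| ≤ ((p : ℤ) - 1) / 2) :
    (i : ZMod (p ^ 2)) ∈ Ap p := by
  refine Finset.mem_image.mpr ⟨i, ?_, rfl⟩
  rw [Finset.mem_Icc]
  rw [abs_le] at hi
  omega

private lemma neg_mem_Ap {a : ZMod (p ^ 2)} (ha : a ∈ Ap p) : -a ∈ Ap p := by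
  obtain ⟨i, hi, rfl⟩ := Finset.mem_image.mp ha
  rw [Finset.mem_Icc] at hi
  have : ((-i : ℤ) : ZMod (p ^ 2)) = -(i : ZMod (p ^ 2)) := by push_cast; ring
  rw [← this]
  exact mem_Ap p (-i) (abs_le.mpr ⟨by omega, by omega⟩)

private lemma cnt_neg (k : ℕ) (z : ZMod (p ^ 2)) : cnt p k (-z) = cnt p k z := by
  classical
  unfold cnt
  refine Finset.card_nbij' (fun f => fun i => -(f i)) (fun f => fun i => -(f i)) ?_ ?_ ?_ ?_
  · intro f hf
    rw [Finset.mem_coe, Finset.mem_filter, Fintype.mem_piFinset] at hf ⊢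
    refine ⟨fun i => neg_mem_Ap p (hf.1 i), ?_⟩
    show ∑ i, -(f i) = z
    rw [Finset.sum_neg_distrib, hf.2, neg_neg]
  · intro f hf
    rw [Finset.mem_coe, Finset.mem_filter, Fintype.mem_piFinset] at hf ⊢
    refine ⟨fun i => neg_mem_Ap p (hf.1 i), ?_⟩
    show ∑ i, -(f i) = -z
    rw [Finset.sum_neg_distrib, hf.2]
  · intro f _; funext i; simp
  · intro f _; funext i; simp

private lemma cnt_zero (z : ZMod (p ^ 2)) :
    cnt p 0 z = if (0 : ZMod (p ^ 2)) = z then 1 else 0 := by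
  classical
  unfold cnt
  have h1 : (Fintype.piFinset (fun _ : Fin 0 => Ap p)) = {fun i => i.elim0} := by
    ext f
    simp only [Fintype.mem_piFinset, Finset.mem_singleton]
    constructor
    · intro _; funext i; exact i.elim0
    · intro _ i; exact i.elim0
  rw [h1, Finset.filter_singleton]
  split_ifs with h h2 h3
  · simp
  · exact absurd (by simpa using h) h2
  · exact absurd (by simpa using h3) h
  · simp

private lemma cnt_succ (k : ℕ) (z : ZMod (p ^ 2)) :
    cnt p (k + 1) z = ∑ a ∈ Ap p, cnt p k (z - a) := by
  classical
  unfold cnt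
  rw [Finset.card_eq_sum_card_fiberwise (f := fun f => f 0) (t := Ap p)
    (fun f hf => by
      rw [Finset.mem_coe, Finset.mem_filter, Fintype.mem_piFinset] at hf
      exact hf.1 0)]
  refine Finset.sum_congr rfl fun a ha => ?_
  refine Finset.card_nbij' (fun f => Fin.tail f) (fun g => Fin.cons a g) ?_ ?_ ?_ ?_
  · intro f hf
    simp only [Finset.mem_coe, Finset.mem_filter, Fintype.mem_piFinset] at hf ⊢
    obtain ⟨⟨hmem, hsum⟩, h0⟩ := hf
    refine ⟨fun i => hmem i.succ, ?_⟩
    have hs : a + ∑ i : Fin k, f i.succ = z := by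
      rw [← h0, ← Fin.sum_univ_succ]; exact hsum
    show ∑ i : Fin k, f i.succ = z - a
    rw [eq_sub_iff_add_eq, add_comm]
    exact hs
  · intro g hg
    simp only [Finset.mem_coe, Finset.mem_filter, Fintype.mem_piFinset] at hg ⊢
    obtain ⟨hmem, hsum⟩ := hg
    refine ⟨⟨fun i => ?_, ?_⟩, ?_⟩
    · induction i using Fin.cases with
      | zero => simpa using ha
      | succ j => simpa using hmem j
    · rw [Fin.sum_univ_succ]
      simp only [Fin.cons_zero, Fin.cons_succ]
      rw [hsum]; ring
    · simp
  · intro f hf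
    rw [Finset.mem_coe, Finset.mem_filter] at hf
    rw [← hf.2]
    exact Fin.cons_self_tail f
  · intro g _
    funext i
    simp [Fin.tail]

end Aux

section Mono
variable (p : ℕ) [NeZero p]

private lemma cnt_abs (k : ℕ) (i : ℤ) :
    cnt p k ((|i| : ℤ) : ZMod (p ^ 2)) = cnt p k ((i : ℤ) : ZMod (p ^ 2)) := by
  rcases le_or_gt 0 i with h | h
  · rw [abs_of_nonneg h]
  · rw [abs_of_neg h]
    have : ((-i : ℤ) : ZMod (p ^ 2)) = -((i : ℤ) : ZMod (p ^ 2)) := by push_cast; ring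
    rw [this, cnt_neg]

private lemma cnt_mono (t : ℕ) (hpt : p = 2 * t + 1) (k : ℕ) :
    ∀ m m' : ℤ, 0 ≤ m → m ≤ m' → 2 * m' ≤ (p : ℤ) ^ 2 - 1 →
      cnt p k ((m' : ZMod (p ^ 2))) ≤ cnt p k ((m : ZMod (p ^ 2))) := by
  induction k with
  | zero =>
    intro m m' hm0 hmm hb
    obtain ⟨u, hP, hu0⟩ : ∃ u : ℤ, (p : ℤ) ^ 2 = 4 * u + 4 * (t : ℤ) + 1 ∧ 0 ≤ u :=
      ⟨(t : ℤ) * (t : ℤ), by rw [hpt]; push_cast; ring, mul_self_nonneg _⟩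
    rw [cnt_zero, cnt_zero]
    have himp : (0 : ZMod (p ^ 2)) = (m' : ZMod (p ^ 2)) →
        (0 : ZMod (p ^ 2)) = (m : ZMod (p ^ 2)) := by
      intro h1
      have hdvd : ((p ^ 2 : ℕ) : ℤ) ∣ m' := (ZMod.intCast_zmod_eq_zero_iff_dvd m' _).mp h1.symm
      have hm'0 : m' = 0 := by
        rcases eq_or_ne m' 0 with h | h
        · exact h
        · have h2 := Int.le_of_dvd (lt_of_le_of_ne (le_trans hm0 hmm) (Ne.symm h)) hdvd
          push_cast at h2
          rw [hP] at h2 hb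
          omega
      have hm00 : m = 0 := by omega
      rw [hm00]; simp
    split_ifs with h1 h2
    · exact le_refl _
    · exact absurd (himp h1) h2
    · exact Nat.zero_le _
    · exact le_refl _
  | succ k IH =>
    obtain ⟨Q, hQ⟩ : ∃ Q : ℤ, (p : ℤ) ^ 2 = Q := ⟨_, rfl⟩
    rw [hQ] at IH ⊢
    obtain ⟨u, hP, hu0⟩ : ∃ u : ℤ, Q = 4 * u + 4 * (t : ℤ) + 1 ∧ 0 ≤ u :=
      ⟨(t : ℤ) * (t : ℤ), by rw [← hQ, hpt]; push_cast; ring, mul_self_nonneg _⟩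
    have hh : ((p : ℤ) - 1) / 2 = (t : ℤ) := by rw [hpt]; push_cast; omega
    set F : ℤ → ℕ := fun s => cnt p k ((s : ZMod (p ^ 2))) with hF
    have hcast : ∀ s : ℤ, ((s + (p : ℤ) ^ 2 : ℤ) : ZMod (p ^ 2)) = ((s : ℤ) : ZMod (p ^ 2)) := by
      intro s
      have hz : ((p : ZMod (p ^ 2))) ^ 2 = 0 := by
        rw [← Nat.cast_pow, ZMod.natCast_self]
      push_cast
      rw [hz, add_zero]
    have hFper : ∀ s : ℤ, F (s + Q) = F s := by
      intro s
      rw [← hQ]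
      show cnt p k _ = cnt p k _
      rw [hcast s]
    have hFabs : ∀ s : ℤ, F |s| = F s := fun s => cnt_abs p k s
    have hwin : ∀ w : ℤ, cnt p (k + 1) ((w : ZMod (p ^ 2)))
        = ∑ j ∈ Finset.Icc (w - (t : ℤ)) (w + (t : ℤ)), F j := by
      intro w
      rw [cnt_succ]
      unfold Ap
      rw [Finset.sum_image (by
        intro x hx y hy hxy
        rw [Finset.mem_coe, Finset.mem_Icc, hh] at hx hy
        refine zmod_int_inj p x y ?_ hxy
        rw [abs_lt, hQ]
        constructor <;> omega)]
      rw [hh]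
      refine Finset.sum_nbij' (fun i => w - i) (fun j => w - j) ?_ ?_ ?_ ?_ ?_
      · intro i hi; simp only [Finset.mem_Icc] at hi ⊢; omega
      · intro j hj; simp only [Finset.mem_Icc] at hj ⊢; omega
      · intro i _; ring
      · intro j _; ring
      · intro i _
        show cnt p k _ = cnt p k _
        congr 1
        push_cast
        ring
    have hstep : ∀ w : ℤ, 0 ≤ w → 2 * (w + 1) ≤ Q - 1 →
        (∑ j ∈ Finset.Icc (w + 1 - (t : ℤ)) (w + 1 + (t : ℤ)), F j)
          ≤ ∑ j ∈ Finset.Icc (w - (t : ℤ)) (w + (t : ℤ)), F j := by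
      intro w hw hwb
      have hins1 : Finset.Icc (w - (t : ℤ)) (w + 1 + (t : ℤ))
          = insert (w - (t : ℤ)) (Finset.Icc (w + 1 - (t : ℤ)) (w + 1 + (t : ℤ))) := by
        ext j; simp only [Finset.mem_Icc, Finset.mem_insert]; omega
      have hins2 : Finset.Icc (w - (t : ℤ)) (w + 1 + (t : ℤ))
          = insert (w + 1 + (t : ℤ)) (Finset.Icc (w - (t : ℤ)) (w + (t : ℤ))) := by
        ext j; simp only [Finset.mem_Icc, Finset.mem_insert]; omega
      have hni1 : (w - (t : ℤ)) ∉ Finset.Icc (w + 1 - (t : ℤ)) (w + 1 + (t : ℤ)) := by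
        simp only [Finset.mem_Icc]; omega
      have hni2 : (w + 1 + (t : ℤ)) ∉ Finset.Icc (w - (t : ℤ)) (w + (t : ℤ)) := by
        simp only [Finset.mem_Icc]; omega
      have he : F (w - (t : ℤ)) + ∑ j ∈ Finset.Icc (w + 1 - (t : ℤ)) (w + 1 + (t : ℤ)), F j
          = F (w + 1 + (t : ℤ)) + ∑ j ∈ Finset.Icc (w - (t : ℤ)) (w + (t : ℤ)), F j := by
        rw [← Finset.sum_insert hni1, ← hins1, hins2, Finset.sum_insert hni2]
      have hkey : F (w + 1 + (t : ℤ)) ≤ F (w - (t : ℤ)) := by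
        have habs : F (w - (t : ℤ)) = F |w - (t : ℤ)| := (hFabs _).symm
        rcases le_or_gt (2 * (w + 1 + (t : ℤ))) (Q - 1) with hc | hc
        · rw [habs]
          exact IH |w - (t : ℤ)| (w + 1 + (t : ℤ)) (abs_nonneg _)
            (by rw [abs_le]; constructor <;> omega) hc
        · have h1 : F (w + 1 + (t : ℤ)) = F (Q - (w + 1 + (t : ℤ))) := by
            calc F (w + 1 + (t : ℤ)) = F (w + 1 + (t : ℤ) - Q + Q) := by ring_nf
            _ = F (w + 1 + (t : ℤ) - Q) := hFper _
            _ = F (-(Q - (w + 1 + (t : ℤ)))) := by ring_nf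
            _ = F |(-(Q - (w + 1 + (t : ℤ))))| := (hFabs _).symm
            _ = F |Q - (w + 1 + (t : ℤ))| := by rw [abs_neg]
            _ = F (Q - (w + 1 + (t : ℤ))) := hFabs _
          rw [h1, habs]
          refine IH _ _ (abs_nonneg _) ?_ ?_
          · rw [abs_le]; constructor <;> omega
          · omega
      omega
    intro m m' hm0 hmm hb
    rw [hwin m, hwin m']
    have main : ∀ n : ℤ, m ≤ n → 2 * n ≤ Q - 1 →
        (∑ j ∈ Finset.Icc (n - (t : ℤ)) (n + (t : ℤ)), F j)
          ≤ ∑ j ∈ Finset.Icc (m - (t : ℤ)) (m + (t : ℤ)), F j := by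
      refine Int.le_induction ?_ ?_
      · intro _; exact le_refl _
      · intro n hmn ih hb2
        exact le_trans (hstep n (le_trans hm0 hmn) hb2) (ih (by omega))
    exact main m' hmm hb

end Mono

theorem balanced_min_sum_identity (p : ℕ) [NeZero p] (hp : p.Prime) (hodd : Odd p)
    (k : ℕ) (hk : 1 ≤ k)
    (A' : Finset (ZMod (p ^ 2)))
    (hA' : A' = (Finset.Icc (-(((p : ℤ) - 1) / 2)) (((p : ℤ) - 1) / 2)).image
      (fun i : ℤ => (i : ZMod (p ^ 2))))
    (n' : ZMod (p ^ 2) → ℕ)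
    (hn' : ∀ z, n' z = ((Fintype.piFinset (fun _ : Fin k => A')).filter
      (fun f => ∑ i, f i = z)).card)
    (r : ℕ) (hr : r = n' (((((p : ℤ) - 1) / 2) : ℤ) : ZMod (p ^ 2))) :
    ∑ x : ZMod (p ^ 2), min r (n' x) =
      r * p + ∑ x ∈ Finset.univ \ A', n' x := by
  classical
  obtain ⟨t, hpt⟩ := hodd
  obtain ⟨un, hPn⟩ : ∃ un : ℕ, p ^ 2 = 4 * un + 4 * t + 1 := ⟨t * t, by rw [hpt]; ring⟩
  have hP : (p : ℤ) ^ 2 = 4 * (un : ℤ) + 4 * (t : ℤ) + 1 := by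
    have h := congrArg (fun n : ℕ => (n : ℤ)) hPn
    push_cast at h
    exact h
  have hh : ((p : ℤ) - 1) / 2 = (t : ℤ) := by rw [hpt]; push_cast; omega
  have hApA : A' = Ap p := by rw [hA']; rfl
  have hcnt : ∀ z, n' z = cnt p k z := by
    intro z; rw [hn' z, hApA]; rfl
  have hrF : r = cnt p k (((t : ℤ) : ZMod (p ^ 2))) := by
    rw [hr, hcnt, hh]
  -- key1 : r ≤ n' x for x ∈ A'
  have key1 : ∀ x ∈ A', r ≤ n' x := by
    intro x hx
    rw [hApA] at hx
    obtain ⟨i, hi, rfl⟩ := Finset.mem_image.mp hx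
    rw [Finset.mem_Icc, hh] at hi
    rw [hcnt, hrF, ← cnt_abs p k i]
    exact cnt_mono p t hpt k |i| (t : ℤ) (abs_nonneg _)
      (abs_le.mpr ⟨by omega, by omega⟩) (by rw [hP]; omega)
  -- key2 : n' x ≤ r for x ∉ A'
  have key2 : ∀ x : ZMod (p ^ 2), x ∉ A' → n' x ≤ r := by
    intro x hx
    rw [hApA] at hx
    have hxval : ((x.val : ℤ) : ZMod (p ^ 2)) = x := by
      push_cast
      rw [ZMod.natCast_val, ZMod.cast_id]
    have hvlt : x.val < 4 * un + 4 * t + 1 := by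
      rw [← hPn]; exact ZMod.val_lt x
    rcases le_or_gt (2 * x.val) (p ^ 2 - 1) with hv | hv
    · -- use m' = x.val
      have hgt : (t : ℤ) < (x.val : ℤ) := by
        by_contra hle
        push_neg at hle
        exact hx (hxval ▸ mem_Ap p (x.val : ℤ)
          (by rw [hh]; rw [abs_le]; constructor <;> omega))
      have hv' : 2 * x.val ≤ (4 * un + 4 * t + 1) - 1 := by rw [← hPn]; exact hv
      rw [hcnt, hrF, ← hxval]
      exact cnt_mono p t hpt k (t : ℤ) ((x.val : ℤ)) (by positivity)
        (le_of_lt hgt) (by rw [hP]; omega)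
    · -- use m' = p^2 - x.val, representing -x
      have hv' : (4 * un + 4 * t + 1) - 1 < 2 * x.val := by rw [← hPn]; exact hv
      have hme : (((p ^ 2 : ℕ) - (x.val : ℤ) : ℤ) : ZMod (p ^ 2)) = -x := by
        push_cast
        rw [ZMod.natCast_val, ZMod.cast_id]
        rw [← Nat.cast_pow, ZMod.natCast_self]
        ring
      have hnx : -x ∉ Ap p := by
        intro hmem
        exact hx (by simpa using neg_mem_Ap p hmem)
      have hgt : (t : ℤ) < ((p ^ 2 : ℕ) - (x.val : ℤ) : ℤ) := by
        by_contra hle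
        push_neg at hle
        refine hnx (hme ▸ mem_Ap p _ ?_)
        push_cast at hle
        rw [hP] at hle
        rw [hh, abs_le]
        push_cast
        rw [hP]
        constructor <;> omega
      have hcx : cnt p k x = cnt p k (-x) := (cnt_neg p k x).symm
      rw [hcnt, hrF, hcx, ← hme]
      refine cnt_mono p t hpt k (t : ℤ) _ (by positivity) (le_of_lt hgt) ?_
      push_cast
      rw [hP]
      omega
  -- cardinality of A'
  have hcard : A'.card = p := by
    rw [hA']
    rw [Finset.card_image_of_injOn (fun x hx y hy hxy => by
      simp only [Finset.mem_coe, Finset.mem_Icc, hh] at hx hy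
      exact zmod_int_inj p x y (by rw [abs_lt, hP]; constructor <;> omega) hxy)]
    rw [Int.card_Icc, hh]
    omega
  -- assemble
  have hsplit := Finset.sum_sdiff (f := fun x => min r (n' x)) (Finset.subset_univ A')
  have h1 : ∑ x ∈ A', min r (n' x) = r * p := by
    rw [Finset.sum_congr rfl (fun x hx => min_eq_left (key1 x hx)), Finset.sum_const,
      hcard, smul_eq_mul, mul_comm]
  have h2 : ∑ x ∈ Finset.univ \ A', min r (n' x) = ∑ x ∈ Finset.univ \ A', n' x :=
    Finset.sum_congr rfl (fun x hx => min_eq_right (key2 x (Finset.mem_sdiff.mp hx).2))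
  rw [← hsplit, h1, h2]
  omega
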